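/- If r > m, then the only solution of the reduced system that remains in the closed positive quadrant for all t ≥ 0 and tends to (0,0) as t → ∞ is the identically zero solution; that is, if S(t) ≥ 0, I(t) ≥ 0 for all t ≥ 0 and (S(t), I(t)) → (0,0) as t → ∞, then S(t) = 0 and I(t) = 0 for all t ≥ 0. -/

import Mathlib

open Filter Topology

/-- `(S, I)` is a solution of the reduced system on `[0, ∞)`. -/
def IsSol (r m β γ μ cSS cSI cIS cII a : ℝ) (S I : ℝ → ℝ) : Prop :=
  ∀ t : ℝ, 0 ≤ t →
    HasDerivAt S (r * S t + a * r * I t - m * S t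
      - (cSS * S t + cSI * I t) * S t - β * S t * I t + γ * I t) t ∧
    HasDerivAt I (-(m * I t) - (cIS * S t + cII * I t) * I t
      + β * S t * I t - γ * I t - μ * I t) t

/-- `(s, i)` is an equilibrium point of the reduced system. -/
def IsEquilibrium (r m β γ μ cSS cSI cIS cII a : ℝ) (s i : ℝ) : Prop :=
  r * s + a * r * i - m * s - (cSS * s + cSI * i) * s - β * s * i + γ * i = 0 ∧
  -(m * i) - (cIS * s + cII * i) * i + β * s * i - γ * i - μ * i = 0

/-- All parameters are positive and `a ∈ (0, 1)`. -/
def ParamsPos (r m β γ μ cSS cSI cIS cII a : ℝ) : Prop :=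
  0 < r ∧ 0 < m ∧ 0 < β ∧ 0 < γ ∧ 0 < μ ∧
    0 < cSS ∧ 0 < cSI ∧ 0 < cIS ∧ 0 < cII ∧ 0 < a ∧ a < 1

lemma monoIci_aux {g g' : ℝ → ℝ} {A : ℝ}
    (hg : ∀ t ∈ Set.Ici A, HasDerivAt g (g' t) t)
    (h0 : ∀ t ∈ Set.Ici A, 0 ≤ g' t) :
    MonotoneOn g (Set.Ici A) := by
  apply monotoneOn_of_deriv_nonneg (convex_Ici A)
    (fun t ht => (hg t ht).continuousAt.continuousWithinAt)
  · intro t ht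
    rw [interior_Ici] at ht
    exact (hg t (Set.mem_Ici.mpr (le_of_lt (Set.mem_Ioi.mp ht)))).differentiableAt.differentiableWithinAt
  · intro t ht
    rw [interior_Ici] at ht
    rw [(hg t (Set.mem_Ici.mpr (le_of_lt (Set.mem_Ioi.mp ht)))).deriv]
    exact h0 t (Set.mem_Ici.mpr (le_of_lt (Set.mem_Ioi.mp ht)))

lemma monoIcc_aux {g g' : ℝ → ℝ} {A B : ℝ}
    (hg : ∀ t ∈ Set.Icc A B, HasDerivAt g (g' t) t)
    (h0 : ∀ t ∈ Set.Icc A B, 0 ≤ g' t) :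
    MonotoneOn g (Set.Icc A B) := by
  apply monotoneOn_of_deriv_nonneg (convex_Icc A B)
    (fun t ht => (hg t ht).continuousAt.continuousWithinAt)
  · intro t ht
    rw [interior_Icc] at ht
    exact (hg t ⟨ht.1.le, ht.2.le⟩).differentiableAt.differentiableWithinAt
  · intro t ht
    rw [interior_Icc] at ht
    rw [(hg t ⟨ht.1.le, ht.2.le⟩).deriv]
    exact h0 t ⟨ht.1.le, ht.2.le⟩

set_option maxHeartbeats 1000000 in
/-- If `r > m`, the only nonnegative solution tending to the origin
is the identically zero one. -/
theorem only_zero_solution_tends_to_origin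
    (r m β γ μ cSS cSI cIS cII a : ℝ)
    (hp : ParamsPos r m β γ μ cSS cSI cIS cII a)
    (hrm : m < r)
    (S I : ℝ → ℝ) (hsol : IsSol r m β γ μ cSS cSI cIS cII a S I)
    (hnonneg : ∀ t : ℝ, 0 ≤ t → 0 ≤ S t ∧ 0 ≤ I t)
    (hlim : Tendsto (fun t => (S t, I t)) atTop (𝓝 ((0 : ℝ), (0 : ℝ)))) :
    ∀ t : ℝ, 0 ≤ t → S t = 0 ∧ I t = 0 := by
  obtain ⟨hr, hm, hβ, hγ, hμ, hcSS, hcSI, hcIS, hcII, ha, ha1⟩ := hp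
  set SD : ℝ → ℝ := fun t => r * S t + a * r * I t - m * S t
      - (cSS * S t + cSI * I t) * S t - β * S t * I t + γ * I t with hSDdef
  have hS' : ∀ t : ℝ, 0 ≤ t → HasDerivAt S (SD t) t := fun t ht => (hsol t ht).1
  have hI' : ∀ t : ℝ, 0 ≤ t → HasDerivAt I (-(m * I t) - (cIS * S t + cII * I t) * I t
      + β * S t * I t - γ * I t - μ * I t) t := fun t ht => (hsol t ht).2
  have hSt : Tendsto S atTop (𝓝 0) := by
    have := (continuous_fst.tendsto ((0:ℝ), (0:ℝ))).comp hlim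
    exact this
  have hIt : Tendsto I atTop (𝓝 0) := by
    have := (continuous_snd.tendsto ((0:ℝ), (0:ℝ))).comp hlim
    exact this
  set δ : ℝ := (r - m)/2 with hδdef
  have hδ : 0 < δ := by simp only [hδdef]; linarith
  set ε : ℝ := min ((r-m)/(2*(cSS+cSI))) ((a*r+γ)/β) with hεdef
  have hε : 0 < ε := lt_min (div_pos (by linarith) (by positivity)) (by positivity)
  -- find T past which S, I < ε
  have h1 : ∀ᶠ t in atTop, S t < ε := hSt.eventually (gt_mem_nhds hε)
  have h2 : ∀ᶠ t in atTop, I t < ε := hIt.eventually (gt_mem_nhds hε)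
  obtain ⟨T0, hT0⟩ := (h1.and h2).exists_forall_of_atTop
  set T : ℝ := max T0 0 with hTdef
  have hT0le : (0:ℝ) ≤ T := le_max_right _ _
  have hsmall : ∀ t ∈ Set.Ici T, S t < ε ∧ I t < ε := fun t ht =>
    hT0 t (le_trans (le_max_left _ _) ht)
  -- f = S * exp(-δ t)
  set E : ℝ → ℝ := fun t => Real.exp (-δ * t) with hEdef
  have hE' : ∀ t : ℝ, HasDerivAt E (E t * (-δ)) t := fun t => by
    have h : HasDerivAt (fun y : ℝ => -δ * y) (-δ) t := by
      simpa using (hasDerivAt_id t).const_mul (-δ)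
    exact h.exp
  set f : ℝ → ℝ := fun t => S t * E t with hfdef
  have hf' : ∀ t ∈ Set.Ici T, HasDerivAt f ((SD t - δ * S t) * E t) t := by
    intro t ht
    have h := (hS' t (le_trans hT0le ht)).mul (hE' t)
    exact h.congr_deriv (by ring)
  have hkey : ∀ t ∈ Set.Ici T, 0 ≤ (SD t - δ * S t) * E t := by
    intro t ht
    have hSn := (hnonneg t (hT0le.trans ht)).1
    have hIn := (hnonneg t (hT0le.trans ht)).2
    have hs1 : S t < ε := (hsmall t ht).1
    have hs2 : I t < ε := (hsmall t ht).2
    have hεle1 : ε ≤ (r-m)/(2*(cSS+cSI)) := min_le_left _ _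
    have hεle2 : ε ≤ (a*r+γ)/β := min_le_right _ _
    have e1 : cSS * S t + cSI * I t ≤ δ := by
      have h2' : (cSS+cSI) * ε ≤ (r-m)/2 := by
        rw [le_div_iff₀ (by positivity : (0:ℝ) < 2*(cSS+cSI))] at hεle1
        nlinarith
      simp only [hδdef]
      nlinarith
    have e2 : β * S t ≤ a*r + γ := by
      rw [le_div_iff₀ hβ] at hεle2
      nlinarith
    apply mul_nonneg _ (Real.exp_pos _).le
    simp only [hSDdef, hδdef]
    nlinarith [mul_nonneg (sub_nonneg.2 e1) hSn, mul_nonneg (sub_nonneg.2 e2) hIn]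
  have hfmono : MonotoneOn f (Set.Ici T) := monoIci_aux hf' hkey
  have hfnonneg : ∀ t : ℝ, 0 ≤ t → 0 ≤ f t := fun t ht =>
    mul_nonneg (hnonneg t ht).1 (Real.exp_pos _).le
  have hflim : Tendsto f atTop (𝓝 0) := by
    apply tendsto_of_tendsto_of_tendsto_of_le_of_le' tendsto_const_nhds hSt
    · filter_upwards [eventually_ge_atTop (0:ℝ)] with t ht using hfnonneg t ht
    · filter_upwards [eventually_ge_atTop (0:ℝ)] with t ht
      have hE1 : E t ≤ 1 := Real.exp_le_one_iff.mpr (by nlinarith [hδ.le])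
      have hSn := (hnonneg t ht).1
      calc f t = S t * E t := rfl
        _ ≤ S t * 1 := mul_le_mul_of_nonneg_left hE1 hSn
        _ = S t := mul_one _
  have hSzeroT : ∀ t ∈ Set.Ici T, S t = 0 := by
    intro t ht
    have hle : f t ≤ 0 := by
      apply ge_of_tendsto hflim
      filter_upwards [eventually_ge_atTop t] with s hs
      exact hfmono ht (ht.trans hs) hs
    have hge := hfnonneg t (hT0le.trans ht)
    have hf0 : S t * E t = 0 := le_antisymm hle hge
    have := Real.exp_pos (-δ * t)
    rcases mul_eq_zero.mp hf0 with h | h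
    · exact h
    · exact absurd h (ne_of_gt (by simpa [hEdef] using this))
  -- global S = 0
  have hSzero : ∀ t : ℝ, 0 ≤ t → S t = 0 := by
    intro t0 ht0
    set T' : ℝ := max T t0 with hT'def
    have ht0T' : t0 ≤ T' := le_max_right _ _
    have hScont : ∀ t ∈ Set.Icc t0 T', ContinuousAt S t := fun t ht =>
      (hS' t (ht0.trans ht.1)).continuousAt
    have hIcont : ∀ t ∈ Set.Icc t0 T', ContinuousAt I t := fun t ht =>
      (hI' t (ht0.trans ht.1)).continuousAt
    have hcont : ContinuousOn (fun t => cSS * S t + cSI * I t + β * I t) (Set.Icc t0 T') := by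
      intro t ht
      exact (((continuousAt_const.mul (hScont t ht)).add
        (continuousAt_const.mul (hIcont t ht))).add
        (continuousAt_const.mul (hIcont t ht))).continuousWithinAt
    obtain ⟨u, hu, hK⟩ := (isCompact_Icc (a := t0) (b := T')).exists_isMaxOn
      ⟨t0, le_refl t0, ht0T'⟩ hcont
    set K : ℝ := cSS * S u + cSI * I u + β * I u with hKdef
    set E2 : ℝ → ℝ := fun t => Real.exp (K * t) with hE2def
    have hE2' : ∀ t : ℝ, HasDerivAt E2 (E2 t * K) t := fun t => by
      have h : HasDerivAt (fun y : ℝ => K * y) K t := by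
        simpa using (hasDerivAt_id t).const_mul K
      exact h.exp
    set g : ℝ → ℝ := fun t => S t * E2 t with hgdef
    have hg' : ∀ t ∈ Set.Icc t0 T', HasDerivAt g ((SD t + K * S t) * E2 t) t := by
      intro t ht
      have h := (hS' t (ht0.trans ht.1)).mul (hE2' t)
      exact h.congr_deriv (by ring)
    have hgkey : ∀ t ∈ Set.Icc t0 T', 0 ≤ (SD t + K * S t) * E2 t := by
      intro t ht
      have hSn := (hnonneg t (ht0.trans ht.1)).1
      have hIn := (hnonneg t (ht0.trans ht.1)).2
      have hKt : cSS * S t + cSI * I t + β * I t ≤ K := hK ht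
      apply mul_nonneg _ (Real.exp_pos _).le
      simp only [hSDdef]
      nlinarith [mul_nonneg (sub_nonneg.2 hKt) hSn,
        mul_nonneg (le_of_lt (by linarith : (0:ℝ) < r - m)) hSn,
        mul_nonneg (le_of_lt (by positivity : (0:ℝ) < a*r+γ)) hIn]
    have hgmono : MonotoneOn g (Set.Icc t0 T') := monoIcc_aux hg' hgkey
    have hmle : g t0 ≤ g T' :=
      hgmono ⟨le_refl t0, ht0T'⟩ ⟨ht0T', le_refl T'⟩ ht0T'
    have hST' : S T' = 0 := hSzeroT T' (Set.mem_Ici.mpr (le_max_left _ _))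
    have hgT' : g T' = 0 := by simp [hgdef, hST']
    have h0 : S t0 * E2 t0 ≤ 0 := by rw [hgT'] at hmle; exact hmle
    have hEpos : 0 < E2 t0 := Real.exp_pos _
    have hSn0 := (hnonneg t0 ht0).1
    nlinarith [mul_pos hEpos hEpos]
  -- I = 0 for t > 0
  have hIzero : ∀ t : ℝ, 0 < t → I t = 0 := by
    intro t ht
    have hev : S =ᶠ[𝓝 t] fun _ => (0:ℝ) := by
      filter_upwards [Ioi_mem_nhds ht] with s hs using hSzero s (le_of_lt hs)
    have h0 : HasDerivAt S 0 t := (hasDerivAt_const t (0:ℝ)).congr_of_eventuallyEq hev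
    have h1 := (hS' t ht.le).unique h0
    have hSt0 : S t = 0 := hSzero t ht.le
    simp only [hSDdef, hSt0] at h1
    have h2 : (a*r + γ) * I t = 0 := by linarith [h1]
    rcases mul_eq_zero.mp h2 with h | h
    · exact absurd h (ne_of_gt (by positivity))
    · exact h
  have hI0 : I 0 = 0 := by
    have hc : ContinuousAt I 0 := (hI' 0 le_rfl).continuousAt
    have ht1 : Tendsto I (𝓝[>] (0:ℝ)) (𝓝 (I 0)) :=
      (hc.continuousWithinAt).tendsto
    have ht2 : Tendsto I (𝓝[>] (0:ℝ)) (𝓝 0) := by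
      apply Tendsto.congr' _ tendsto_const_nhds
      filter_upwards [self_mem_nhdsWithin] with s hs using (hIzero s hs).symm
    exact tendsto_nhds_unique ht1 ht2
  intro t ht
  refine ⟨hSzero t ht, ?_⟩
  rcases eq_or_lt_of_le ht with h | h
  · rw [← h]; exact hI0
  · exact hIzero t h
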